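/- Let G be a group generated by a finite set X, and let H be a finitely generated subgroup of G whose normal closure N = ⟨H^G⟩ in G is not finitely generated. Then there is a constant C > 0 such that exp(m^(1/2)) ≤ C · γ_X(⌈Cm⌉) for all m ≥ 1. -/

import Mathlib

/-- The word length of `g` with respect to the generating set `X`: the least `n`
such that `g` is a product of `n` elements of `X ∪ X⁻¹` (with length `0` for `1`). -/
noncomputable def wordLength {G : Type*} [Group G] (X : Set G) (g : G) : ℕ :=
  sInf {n : ℕ | ∃ l : List G, l.length = n ∧ (∀ x ∈ l, x ∈ X ∨ x⁻¹ ∈ X) ∧ l.prod = g}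

/-- The growth function `γ_X(n) = |{g ∈ G : ℓ_X(g) ≤ n}|`. -/
noncomputable def growth {G : Type*} [Group G] (X : Set G) (n : ℕ) : ℕ :=
  Set.ncard {g : G | wordLength X g ≤ n}

namespace MilnorAux

variable {G : Type*} [Group G]

theorem wordLength_le {X : Set G} {g : G} (l : List G)
    (hl : ∀ x ∈ l, x ∈ X ∨ x⁻¹ ∈ X) (hp : l.prod = g) : wordLength X g ≤ l.length :=
  Nat.sInf_le ⟨l, rfl, hl, hp⟩

theorem wordLength_one (X : Set G) : wordLength X (1 : G) = 0 :=
  Nat.le_zero.mp (wordLength_le [] (by simp) (by simp))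

theorem exists_list {X : Set G} (hX : Subgroup.closure X = ⊤) (g : G) :
    ∃ l : List G, l.length = wordLength X g ∧ (∀ x ∈ l, x ∈ X ∨ x⁻¹ ∈ X) ∧ l.prod = g := by
  have hg : g ∈ Subgroup.closure X := hX ▸ Subgroup.mem_top g
  have hg' : g ∈ Submonoid.closure (X ∪ X⁻¹) := by
    rw [← Subgroup.closure_toSubmonoid]; exact hg
  obtain ⟨l, hl, hp⟩ := Submonoid.exists_list_of_mem_closure hg'
  have hne : {n : ℕ | ∃ l : List G, l.length = n ∧ (∀ x ∈ l, x ∈ X ∨ x⁻¹ ∈ X)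
      ∧ l.prod = g}.Nonempty := by
    refine ⟨l.length, l, rfl, fun x hx => ?_, hp⟩
    rcases hl x hx with h | h
    · exact Or.inl h
    · exact Or.inr (Set.mem_inv.mp h)
  exact Nat.sInf_mem hne

theorem wordLength_mul_le {X : Set G} (hX : Subgroup.closure X = ⊤) (a b : G) :
    wordLength X (a * b) ≤ wordLength X a + wordLength X b := by
  obtain ⟨la, hla, hea, hpa⟩ := exists_list hX a
  obtain ⟨lb, hlb, heb, hpb⟩ := exists_list hX b
  have := wordLength_le (X := X) (la ++ lb) (fun x hx => by
    rcases List.mem_append.mp hx with h | h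
    · exact hea x h
    · exact heb x h) (by rw [List.prod_append, hpa, hpb])
  simpa [hla, hlb] using this

theorem wordLength_inv_le {X : Set G} (hX : Subgroup.closure X = ⊤) (a : G) :
    wordLength X a⁻¹ ≤ wordLength X a := by
  obtain ⟨la, hla, hea, hpa⟩ := exists_list hX a
  have := wordLength_le (X := X) ((la.map (·⁻¹)).reverse) (fun x hx => by
    simp only [List.mem_reverse, List.mem_map] at hx
    obtain ⟨y, hy, rfl⟩ := hx
    rcases hea y hy with h | h
    · exact Or.inr (by simpa using h)
    · exact Or.inl h)
    (by rw [← List.prod_inv_reverse, hpa])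
  simpa [hla] using this

theorem ball_finite {X : Finset G} (hX : Subgroup.closure (X : Set G) = ⊤) (n : ℕ) :
    {g : G | wordLength (X : Set G) g ≤ n}.Finite := by
  classical
  set Y : Set G := (X : Set G) ∪ (X : Set G)⁻¹ with hY
  have hYfin : Y.Finite := (X.finite_toSet).union (X.finite_toSet.inv)
  haveI : Finite ↥Y := hYfin.to_subtype
  have hlists : {l : List G | l.length ≤ n ∧ ∀ x ∈ l, x ∈ Y}.Finite := by
    have h1 : {l : List ↥Y | l.length ≤ n}.Finite := List.finite_length_le ↥Y n
    refine (h1.image (List.map Subtype.val)).subset ?_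
    rintro l ⟨hlen, hmem⟩
    refine ⟨l.pmap (fun x hx => (⟨x, hx⟩ : ↥Y)) hmem, by simpa using hlen, ?_⟩
    rw [List.map_pmap]
    simp
  refine (hlists.image List.prod).subset ?_
  intro g hg
  obtain ⟨l, hlen, hent, hprod⟩ := exists_list hX g
  simp only [Set.mem_setOf_eq] at hg
  refine ⟨l, ⟨by omega, fun x hx => ?_⟩, hprod⟩
  rcases hent x hx with h | h
  · exact Or.inl h
  · exact Or.inr (Set.mem_inv.mpr h)

variable (X S : Finset G)

/-- conjugates of generators of `H` by elements of length at most `n`. -/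
def conjSet (n : ℕ) : Set G :=
  {c | ∃ g s, s ∈ S ∧ wordLength (X : Set G) g ≤ n ∧ c = g * s * g⁻¹}

noncomputable def KK (n : ℕ) : Subgroup G := Subgroup.closure (conjSet X S n)

theorem KK_mono {n m : ℕ} (h : n ≤ m) : KK X S n ≤ KK X S m := by
  apply Subgroup.closure_mono
  rintro c ⟨g, s, hs, hg, rfl⟩
  exact ⟨g, s, hs, hg.trans h, rfl⟩

theorem conj_mem_KK (hX : Subgroup.closure (X : Set G) = ⊤) (g : G) {n : ℕ} {c : G}
    (hc : c ∈ KK X S n) : g * c * g⁻¹ ∈ KK X S (wordLength (X : Set G) g + n) := by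
  have hmap : Subgroup.map (MulAut.conj g).toMonoidHom (KK X S n)
      ≤ KK X S (wordLength (X : Set G) g + n) := by
    rw [KK, MonoidHom.map_closure, KK, Subgroup.closure_le]
    rintro _ ⟨c, ⟨g', s, hs, hg', rfl⟩, rfl⟩
    apply Subgroup.subset_closure
    refine ⟨g * g', s, hs, ?_, by simp [MulAut.conj_apply]; group⟩
    exact (wordLength_mul_le hX g g').trans (add_le_add le_rfl hg')
  exact hmap ⟨c, hc, rfl⟩

theorem KK_step (hX : Subgroup.closure (X : Set G) = ⊤) {n : ℕ}
    (h : KK X S (n + 1) ≤ KK X S n) : KK X S (n + 2) ≤ KK X S (n + 1) := by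
  rw [KK, Subgroup.closure_le]
  rintro c ⟨g, s, hs, hg, rfl⟩
  by_cases hle : wordLength (X : Set G) g ≤ n + 1
  · exact Subgroup.subset_closure ⟨g, s, hs, hle, rfl⟩
  · obtain ⟨l, hlen, hent, hprod⟩ := exists_list hX g
    match l, hlen, hent, hprod with
    | [], hlen, hent, hprod =>
      exfalso
      simp only [List.length_nil] at hlen
      omega
    | x :: l', hlen, hent, hprod =>
      have hx1 : wordLength (X : Set G) x ≤ 1 :=
        wordLength_le [x] (by simpa using hent x (by simp)) (by simp)
      have hl' : wordLength (X : Set G) l'.prod ≤ n + 1 := by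
        have := wordLength_le (X := (X : Set G)) l' (fun y hy => hent y (by simp [hy])) rfl
        simp only [List.length_cons] at hlen
        omega
      have hgx : g = x * l'.prod := by rw [← hprod]; simp
      have hinner : l'.prod * s * l'.prod⁻¹ ∈ KK X S n :=
        h (Subgroup.subset_closure ⟨l'.prod, s, hs, hl', rfl⟩)
      have := conj_mem_KK X S hX x hinner
      have hmem : x * (l'.prod * s * l'.prod⁻¹) * x⁻¹ ∈ KK X S (n + 1) :=
        KK_mono X S (by omega) this
      have : g * s * g⁻¹ = x * (l'.prod * s * l'.prod⁻¹) * x⁻¹ := by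
        rw [hgx]; group
      rw [this]; exact hmem

/-- the product `c 0 ^ ε 0 * ⋯ * c (t-1) ^ ε (t-1)`. -/
def prodC (c : ℕ → G) (ε : ℕ → Bool) (t : ℕ) : G :=
  ((List.range t).map (fun i => if ε i then c i else 1)).prod

theorem prodC_succ (c : ℕ → G) (ε : ℕ → Bool) (t : ℕ) :
    prodC c ε (t + 1) = prodC c ε t * (if ε t then c t else 1) := by
  simp [prodC, List.range_succ]

theorem prodC_mem (c : ℕ → G) (hc : ∀ n, c n ∈ KK X S (n + 1)) (ε : ℕ → Bool) (t : ℕ) :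
    prodC c ε t ∈ KK X S t := by
  induction t with
  | zero => simp [prodC]
  | succ t ih =>
    rw [prodC_succ]
    refine Subgroup.mul_mem _ (KK_mono X S (by omega) ih) ?_
    by_cases h : ε t
    · simp [h]; exact hc t
    · simp [h]

theorem prodC_inj (c : ℕ → G) (hc : ∀ n, c n ∈ KK X S (n + 1))
    (hc2 : ∀ n, c n ∉ KK X S n) (ε δ : ℕ → Bool) :
    ∀ t, prodC c ε t = prodC c δ t → ∀ i < t, ε i = δ i := by
  intro t
  induction t with
  | zero => intro _ i hi; omega
  | succ t ih =>
    intro h i hi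
    rw [prodC_succ, prodC_succ] at h
    have hmem1 : prodC c ε t ∈ KK X S t := prodC_mem X S c hc ε t
    have hmem2 : prodC c δ t ∈ KK X S t := prodC_mem X S c hc δ t
    have het : ε t = δ t := by
      by_contra hne
      rcases Bool.eq_false_or_eq_true (ε t) with h1 | h1 <;>
        rcases Bool.eq_false_or_eq_true (δ t) with h2 | h2
      · exact hne (h1.trans h2.symm)
      · apply hc2 t
        have : c t = (prodC c ε t)⁻¹ * prodC c δ t := by
          simp only [h1, h2, if_true, if_false, Bool.false_eq_true, mul_one] at h
          rw [← h]; group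
        rw [this]; exact Subgroup.mul_mem _ (Subgroup.inv_mem _ hmem1) hmem2
      · apply hc2 t
        have : c t = (prodC c δ t)⁻¹ * prodC c ε t := by
          simp only [h1, h2, if_true, if_false, Bool.false_eq_true, mul_one] at h
          rw [h]; group
        rw [this]; exact Subgroup.mul_mem _ (Subgroup.inv_mem _ hmem2) hmem1
      · exact hne (h1.trans h2.symm)
    have hcancel : prodC c ε t = prodC c δ t := by
      rw [het] at h
      exact mul_right_cancel h
    rcases Nat.lt_succ_iff_lt_or_eq.mp hi with h' | h'
    · exact ih hcancel i h'
    · rw [h']; exact het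

theorem prodC_len (hX : Subgroup.closure (X : Set G) = ⊤) (c : ℕ → G) (D : ℕ)
    (hlen : ∀ n, wordLength (X : Set G) (c n) ≤ 2 * (n + 1) + D) (ε : ℕ → Bool) (t : ℕ) :
    wordLength (X : Set G) (prodC c ε t) ≤ t * (2 * t + D) := by
  induction t with
  | zero => simp [prodC, wordLength_one]
  | succ t ih =>
    rw [prodC_succ]
    have h1 : wordLength (X : Set G) (if ε t then c t else 1) ≤ 2 * (t + 1) + D := by
      by_cases h : ε t
      · simpa [h] using hlen t
      · simp [h, wordLength_one]
    have := wordLength_mul_le hX (prodC c ε t) (if ε t then c t else 1)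
    have h2 : t * (2 * t + D) + (2 * (t + 1) + D) ≤ (t + 1) * (2 * (t + 1) + D) := by
      nlinarith
    omega

end MilnorAux

open MilnorAux in
/-- Generalized Milnor lemma: if `G = ⟨X⟩` has a finitely generated subgroup `H` whose
normal closure is not finitely generated, then `γ_X(n) ≽ exp(n^(1/2))`. -/
theorem generalized_milnor_lemma {G : Type*} [Group G] (X : Finset G)
    (hX : Subgroup.closure (X : Set G) = ⊤)
    (H : Subgroup G) (hH : H.FG)
    (hNfg : ¬ (Subgroup.normalClosure (H : Set G)).FG) :
    ∃ C : ℝ, 0 < C ∧ ∀ m : ℕ, 1 ≤ m →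
      Real.exp ((m : ℝ) ^ ((1 : ℝ) / 2)) ≤ C * (growth (X : Set G) ⌈C * m⌉₊ : ℝ) := by
  classical
  obtain ⟨S, hS⟩ := hH
  set D : ℕ := S.sup (wordLength (X : Set G)) with hD
  -- the chain `KK` is strictly increasing at every step
  have hK_ne : ∀ n, ¬ KK X S (n + 1) ≤ KK X S n := by
    intro n hle
    have hstep : ∀ m, KK X S (n + 1 + m) ≤ KK X S (n + m) := by
      intro m
      induction m with
      | zero => simpa using hle
      | succ m ih =>
        have ih' : KK X S (n + m + 1) ≤ KK X S (n + m) := by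
          rwa [show n + 1 + m = n + m + 1 from by omega] at ih
        have h2 := KK_step X S hX ih'
        rwa [show n + 1 + (m + 1) = n + m + 2 from by omega,
          show n + (m + 1) = n + m + 1 from by omega]
    have hall : ∀ m, KK X S (n + m) ≤ KK X S n := by
      intro m
      induction m with
      | zero => exact le_rfl
      | succ m ih =>
        have h1 : KK X S (n + (m + 1)) ≤ KK X S (n + m) := by
          have := hstep m; convert this using 2; omega
        exact h1.trans ih
    have hallk : ∀ k, KK X S k ≤ KK X S n := by
      intro k
      rcases le_or_gt k n with h | h
      · exact KK_mono X S h
      · obtain ⟨m, rfl⟩ := Nat.exists_eq_add_of_le h.le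
        exact hall m
    haveI hnormal : (KK X S n).Normal := by
      constructor
      intro c hc g
      exact hallk _ (conj_mem_KK X S hX g hc)
    have hHsub : (H : Set G) ⊆ (KK X S n : Set G) := by
      have : H ≤ KK X S n := by
        rw [← hS, Subgroup.closure_le]
        intro s hs
        exact Subgroup.subset_closure ⟨1, s, hs, by simp [wordLength_one], by group⟩
      exact this
    have h1 : Subgroup.normalClosure (H : Set G) ≤ KK X S n :=
      Subgroup.normalClosure_le_normal hHsub
    have h2 : KK X S n ≤ Subgroup.normalClosure (H : Set G) := by
      rw [KK, Subgroup.closure_le]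
      rintro c ⟨g, s, hs, hg, rfl⟩
      have hsH : s ∈ Subgroup.normalClosure (H : Set G) :=
        Subgroup.subset_normalClosure (by rw [← hS]; exact Subgroup.subset_closure hs)
      exact Subgroup.Normal.conj_mem (Subgroup.normalClosure_normal) s hsH g
    have heq : Subgroup.normalClosure (H : Set G) = KK X S n := le_antisymm h1 h2
    apply hNfg
    rw [heq, Subgroup.fg_iff]
    refine ⟨conjSet X S n, rfl, ?_⟩
    have : conjSet X S n ⊆ (fun p : G × G => p.1 * p.2 * p.1⁻¹) ''
        ({g : G | wordLength (X : Set G) g ≤ n} ×ˢ (S : Set G)) := by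
      rintro c ⟨g, s, hs, hg, rfl⟩
      exact ⟨(g, s), ⟨hg, hs⟩, rfl⟩
    exact Set.Finite.subset (((ball_finite hX n).prod S.finite_toSet).image _) this
  -- choose witnesses of strict growth
  have hchoice : ∀ n, ∃ c, c ∈ conjSet X S (n + 1) ∧ c ∉ KK X S n := by
    intro n
    by_contra h
    push_neg at h
    exact hK_ne n (by rw [KK, Subgroup.closure_le]; intro c hc; exact h c hc)
  choose c hc1 hc2 using hchoice
  have hcmem : ∀ n, c n ∈ KK X S (n + 1) := fun n => Subgroup.subset_closure (hc1 n)
  have hclen : ∀ n, wordLength (X : Set G) (c n) ≤ 2 * (n + 1) + D := by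
    intro n
    obtain ⟨g, s, hs, hg, hcn⟩ := hc1 n
    have hsD : wordLength (X : Set G) s ≤ D := Finset.le_sup hs
    have h1 := wordLength_mul_le hX (g * s) g⁻¹
    have h2 := wordLength_mul_le hX g s
    have h3 := wordLength_inv_le hX g
    rw [hcn]; omega
  -- counting: 2^t elements in the ball of radius t*(2t+D)
  have hcount : ∀ t : ℕ, 2 ^ t ≤ growth (X : Set G) (t * (2 * t + D)) := by
    intro t
    set F : (Fin t → Bool) → G :=
      fun ε => prodC c (fun i => if h : i < t then ε ⟨i, h⟩ else false) t with hF
    have hFinj : Function.Injective F := by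
      intro ε δ h
      funext i
      have := prodC_inj X S c hcmem hc2 _ _ t h i.1 i.2
      simpa [i.2] using this
    have himg : ∀ ε, wordLength (X : Set G) (F ε) ≤ t * (2 * t + D) :=
      fun ε => prodC_len X hX c D hclen _ t
    calc 2 ^ t = (Finset.univ.image F).card := by
            rw [Finset.card_image_of_injective _ hFinj]
            simp
      _ = ((Finset.univ.image F : Finset G) : Set G).ncard := (Set.ncard_coe_finset _).symm
      _ ≤ growth (X : Set G) (t * (2 * t + D)) := by
            apply Set.ncard_le_ncard _ (ball_finite hX _)
            intro g hg
            simp only [Finset.coe_image, Set.mem_image] at hg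
            obtain ⟨ε, _, rfl⟩ := hg
            exact himg ε
  -- final assembly
  have hDnn : (0 : ℝ) ≤ (D : ℝ) := Nat.cast_nonneg _
  refine ⟨(8 * D + 33 : ℝ), by linarith, ?_⟩
  intro m hm
  have hm1 : (1 : ℝ) ≤ (m : ℝ) := by exact_mod_cast hm
  set k : ℕ := ⌈Real.sqrt m⌉₊ with hk
  set t : ℕ := 2 * k with ht
  have hsqm : (1 : ℝ) ≤ Real.sqrt m := by
    rw [show (1:ℝ) = Real.sqrt 1 by simp]
    exact Real.sqrt_le_sqrt hm1
  have hsqnn : (0:ℝ) ≤ Real.sqrt m := Real.sqrt_nonneg _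
  have hkge : Real.sqrt m ≤ (k : ℝ) := Nat.le_ceil _
  have hkle : (k : ℝ) ≤ 2 * Real.sqrt m := by
    have := Nat.ceil_lt_add_one hsqnn (R := ℝ)
    rw [← hk] at this
    linarith
  have hsm : Real.sqrt m ≤ (m : ℝ) := by
    nlinarith [Real.sq_sqrt (le_trans zero_le_one hm1)]
  have hsq2 : Real.sqrt m * Real.sqrt m = (m : ℝ) := Real.mul_self_sqrt (by linarith)
  -- radius bound
  have hR : ((t * (2 * t + D) : ℕ) : ℝ) ≤ (8 * D + 33) * m := by
    push_cast [ht]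
    have hk2 : (k : ℝ) * (k : ℝ) ≤ 4 * m := by nlinarith
    have hkm : (k : ℝ) ≤ 2 * m := by nlinarith
    nlinarith [Nat.cast_nonneg (α := ℝ) D, Nat.cast_nonneg (α := ℝ) k]
  have hRle : t * (2 * t + D) ≤ ⌈(8 * D + 33 : ℝ) * m⌉₊ := by
    have h1 : ((t * (2 * t + D) : ℕ) : ℝ) ≤ (⌈(8 * D + 33 : ℝ) * m⌉₊ : ℝ) :=
      hR.trans (Nat.le_ceil _)
    exact_mod_cast h1
  have hmono : growth (X : Set G) (t * (2 * t + D)) ≤ growth (X : Set G) ⌈(8 * D + 33 : ℝ) * m⌉₊ := by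
    apply Set.ncard_le_ncard _ (ball_finite hX _)
    intro g hg
    exact le_trans hg hRle
  have hgrowth : (2 : ℝ) ^ t ≤ (growth (X : Set G) ⌈(8 * D + 33 : ℝ) * m⌉₊ : ℝ) := by
    have := (hcount t).trans hmono
    exact_mod_cast this
  have hexp : Real.exp ((m : ℝ) ^ ((1 : ℝ) / 2)) ≤ (2 : ℝ) ^ t := by
    rw [← Real.sqrt_eq_rpow]
    have h2t : (2 : ℝ) ^ t = Real.exp (t * Real.log 2) := by
      rw [Real.exp_nat_mul, Real.exp_log two_pos]
    rw [h2t]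
    apply Real.exp_le_exp.mpr
    have hlog : (1 : ℝ) / 2 ≤ Real.log 2 := by
      have := Real.log_two_gt_d9
      linarith
    have htge : 2 * Real.sqrt m ≤ (t : ℝ) := by
      push_cast [ht]; linarith
    nlinarith
  have hgpos : (0 : ℝ) ≤ (growth (X : Set G) ⌈(8 * D + 33 : ℝ) * m⌉₊ : ℝ) := Nat.cast_nonneg _
  have hC1 : (1 : ℝ) ≤ 8 * D + 33 := by linarith
  calc Real.exp ((m : ℝ) ^ ((1 : ℝ) / 2)) ≤ (2 : ℝ) ^ t := hexp
    _ ≤ (growth (X : Set G) ⌈(8 * D + 33 : ℝ) * m⌉₊ : ℝ) := hgrowth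
    _ ≤ (8 * D + 33) * (growth (X : Set G) ⌈(8 * D + 33 : ℝ) * m⌉₊ : ℝ) := by nlinarith
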